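/- For BDF3 applied to u' = λu with λ < 0 real, all three roots of (11/6 - λΔt)μ³ - 3μ² + (3/2)μ - 1/3 = 0 have modulus strictly less than 1 for every Δt > 0 (BDF3 is stable on the negative real axis). -/

import Mathlib

set_option maxHeartbeats 1000000


/-- Stability of BDF3 on the negative real axis: for `λ < 0` and
any `Δt > 0`, all three (complex) roots of
`(11/6 - λΔt) μ³ - 3μ² + (3/2)μ - 1/3 = 0` have modulus strictly less than 1. -/
theorem stmt_16 (lam Δt : ℝ) (hlam : lam < 0) (hΔt : 0 < Δt) :
    ∀ μ : ℂ, ((11 / 6 - lam * Δt : ℝ) : ℂ) * μ ^ 3 - 3 * μ ^ 2 + (3 / 2) * μ - 1 / 3 = 0 →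
      ‖μ‖ < 1 := by
  intro μ hμ
  by_contra hge
  push_neg at hge
  set a : ℝ := 11 / 6 - lam * Δt with ha_def
  have ha : 11 / 6 < a := by nlinarith
  have hne : μ + 1 ≠ 0 := by
    intro h
    have hm : μ = -1 := by linear_combination h
    rw [hm] at hμ
    have h2 : ((a : ℂ)) = -29/6 := by linear_combination -hμ
    have h3 : a = -29/6 := by exact_mod_cast h2
    linarith
  have key : ((a + 29/6 : ℝ) : ℂ) * (μ - 1) ^ 3
      + ((3*a + 1/2 : ℝ) : ℂ) * (μ - 1) ^ 2 * (μ + 1)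
      + ((3*a - 7/2 : ℝ) : ℂ) * (μ - 1) * (μ + 1) ^ 2
      + ((a - 11/6 : ℝ) : ℂ) * (μ + 1) ^ 3 = 0 := by
    push_cast
    linear_combination (8 : ℂ) * hμ
  set cW : ℂ := (starRingEnd ℂ) (μ + 1) with hcW_def
  set n : ℝ := Complex.normSq (μ + 1) with hn_def
  have hn : 0 < n := Complex.normSq_pos.mpr hne
  have hW : (μ + 1) * cW = (n : ℂ) := Complex.mul_conj (μ + 1)
  set ζ : ℂ := (μ - 1) * cW with hζ_def
  have key2 : ((a + 29/6 : ℝ) : ℂ) * ζ ^ 3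
      + ((3*a + 1/2 : ℝ) : ℂ) * (n : ℂ) * ζ ^ 2
      + ((3*a - 7/2 : ℝ) : ℂ) * (n : ℂ) ^ 2 * ζ
      + ((a - 11/6 : ℝ) : ℂ) * (n : ℂ) ^ 3 = 0 := by
    rw [hζ_def]
    push_cast
    push_cast at key hW
    linear_combination cW ^ 3 * key
      - (((3:ℂ)*(a:ℂ) + 1/2) * (μ - 1) ^ 2 * cW ^ 2
        + ((3:ℂ)*(a:ℂ) - 7/2) * (μ - 1) * cW * ((n:ℂ) + (μ + 1) * cW)
        + ((a:ℂ) - 11/6) * ((n:ℂ) ^ 2 + (n:ℂ) * (μ + 1) * cW + (μ + 1) ^ 2 * cW ^ 2)) * hW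
  set s : ℝ := ζ.re with hs_def
  set t : ℝ := ζ.im with ht_def
  have hs : 0 ≤ s := by
    have h1 : 1 ≤ Complex.normSq μ := by
      have h2 := Complex.sq_norm μ
      nlinarith [norm_nonneg μ]
    rw [hs_def, hζ_def, hcW_def]
    simp only [Complex.mul_re, Complex.sub_re, Complex.sub_im, Complex.add_re,
      Complex.add_im, Complex.one_re, Complex.one_im, Complex.conj_re, Complex.conj_im]
    have h3 := Complex.normSq_apply μ
    nlinarith
  have hre := congrArg Complex.re key2
  have him := congrArg Complex.im key2
  simp only [pow_succ, pow_zero, one_mul, Complex.mul_re, Complex.mul_im,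
    Complex.add_re, Complex.add_im, Complex.ofReal_re, Complex.ofReal_im,
    Complex.zero_re, Complex.zero_im, ← hs_def, ← ht_def] at hre him
  -- coefficients
  have hc3 : (0:ℝ) < a + 29/6 := by linarith
  have hc2 : (0:ℝ) < 3*a + 1/2 := by linarith
  have hc1 : (0:ℝ) < 3*a - 7/2 := by linarith
  have hc0 : (0:ℝ) < a - 11/6 := by linarith
  have hfac : t * (3*(a + 29/6)*s^2 - (a + 29/6)*t^2 + 2*(3*a + 1/2)*n*s + (3*a - 7/2)*n^2) = 0 := by
    linear_combination him
  have hfac2 := hfac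
  have hre' : (a + 29/6)*(s^3 - 3*s*t^2) + (3*a + 1/2)*n*(s^2 - t^2)
      + (3*a - 7/2)*n^2*s + (a - 11/6)*n^3 = 0 := by linear_combination hre
  clear hre him key key2 hμ hW hfac hcW_def hζ_def
  rcases mul_eq_zero.mp hfac2 with ht0 | hQ
  · -- t = 0
    have G1 : (a + 29/6)*s^3 + (3*a + 1/2)*n*s^2 + (3*a - 7/2)*n^2*s + (a - 11/6)*n^3 = 0 := by
      linear_combination hre' + (3*(a + 29/6)*s*t + (3*a + 1/2)*n*t) * ht0
    nlinarith [G1, mul_pos hc0 (pow_pos hn 3),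
      mul_nonneg hc3.le (mul_nonneg (mul_nonneg hs hs) hs),
      mul_nonneg (mul_nonneg hc2.le hn.le) (mul_nonneg hs hs),
      mul_nonneg (mul_nonneg hc1.le (mul_nonneg hn.le hn.le)) hs]
  · -- t ≠ 0, quadratic relation holds
    have G2 : -8*(a+29/6)^2*s^3 - 8*(3*a+1/2)*(a+29/6)*n*s^2
        - 2*((3*a-7/2)*(a+29/6) + (3*a+1/2)^2)*n^2*s
        - (8*a^2 - 12*a + 64/9)*n^3 = 0 := by
      linear_combination (a + 29/6) * hre' - (3*(a + 29/6)*s + (3*a + 1/2)*n) * hQ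
    have hpos : (0:ℝ) < 8*a^2 - 12*a + 64/9 := by nlinarith [sq_nonneg (a - 3/4)]
    nlinarith [G2, mul_pos hpos (pow_pos hn 3),
      mul_nonneg (sq_nonneg (a + 29/6)) (mul_nonneg (mul_nonneg hs hs) hs),
      mul_nonneg (mul_nonneg (mul_nonneg hc2.le hc3.le) hn.le) (mul_nonneg hs hs),
      mul_nonneg (mul_nonneg (add_pos (mul_pos hc1 hc3) (mul_pos hc2 hc2)).le
        (mul_nonneg hn.le hn.le)) hs]
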